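/- arXiv:2003.03326 — 2 statements merged into one kernel-verified Lean document; each statement's English description precedes it below -/
import Mathlib

section
/- Suppose $T_j:\mathcal{Y}_j\to\mathcal{M}(X)$ are positive linear operators on $p_j$-convex normed lattices $\mathcal{Y}_j$ ($1\leq p_j<\infty$), $\theta_j>0$ with $\sum_j\theta_j=1$, and the scalar inequality $\int_X\prod_{j=1}^d|T_jf_j|^{p_j\theta_j}\,d\mu\leq B\prod_{j=1}^d\|f_j\|_{\mathcal{Y}_j}^{p_j\theta_j}$ holds for all $f_j$. Then the vector-valued inequality $\int_X\prod_{j=1}^d\left(\sum_{k=1}^N|T_jf_{jk}|^{p_j}\right)^{\theta_j}d\mu\leq B\prod_{j=1}^d C_{p_j}(\mathcal{Y}_j)^{p_j\theta_j}\prod_{j=1}^d\left(\sum_{k=1}^N\|f_{jk}\|_{\mathcal{Y}_j}^{p_j}\right)^{\theta_j}$ holds for all $N$ and all $f_{jk}\in\mathcal{Y}_j$. -/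
open Finset

private lemma sign_mul_self_eq_abs (t : ℝ) : Real.sign t * t = |t| := by
  rcases lt_trichotomy t 0 with h | h | h
  · rw [Real.sign_of_neg h, abs_of_neg h]; ring
  · simp [h]
  · rw [Real.sign_of_pos h, abs_of_pos h]; ring

private lemma abs_sign_le_one (t : ℝ) : |Real.sign t| ≤ 1 := by
  rcases lt_trichotomy t 0 with h | h | h
  · simp [Real.sign_of_neg h]
  · simp [h, Real.sign_zero]
  · simp [Real.sign_of_pos h]

private lemma key_pointwise {α X : Type*} (T : (α → ℝ) →ₗ[ℝ] (X → ℝ))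
    (hpos : ∀ f : α → ℝ, 0 ≤ f → 0 ≤ T f) {p : ℝ} (hp : 1 ≤ p)
    {N : ℕ} (f : Fin N → α → ℝ) (x : X) :
    ∑ k, |T (f k) x| ^ p ≤ (T (fun y => (∑ k, |f k y| ^ p) ^ (1 / p)) x) ^ p := by
  have hppos : (0:ℝ) < p := lt_of_lt_of_le one_pos hp
  set g : α → ℝ := fun y => (∑ k, |f k y| ^ p) ^ (1 / p) with hgdef
  have hmono : ∀ h h' : α → ℝ, h ≤ h' → ∀ y, T h y ≤ T h' y := by
    intro h h' hle y
    have h0 := hpos (h' - h) (fun z => sub_nonneg.2 (hle z)) y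
    rw [map_sub] at h0
    have h0' : 0 ≤ T h' y - T h y := by simpa [Pi.sub_apply] using h0
    linarith
  have hgnn : (0:α → ℝ) ≤ g := fun y =>
    Real.rpow_nonneg (Finset.sum_nonneg fun k _ => Real.rpow_nonneg (abs_nonneg _) _) _
  have hgx : 0 ≤ T g x := hpos g hgnn x
  set t : Fin N → ℝ := fun k => T (f k) x with htdef
  set S : ℝ := ∑ k, |t k| ^ p with hSdef
  have hS0 : 0 ≤ S := Finset.sum_nonneg fun k _ => Real.rpow_nonneg (abs_nonneg _) _
  rcases eq_or_lt_of_le hS0 with h0 | hSpos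
  · rw [← h0]; exact Real.rpow_nonneg hgx _
  have key : S ^ (1 / p) ≤ T g x := by
    by_cases hp1 : p = 1
    · subst hp1
      rw [hSdef]
      simp only [Real.rpow_one, one_div, inv_one]
      have h1 : ∀ k, |t k| ≤ T (fun y => |f k y|) x := by
        intro k
        rw [abs_le]
        refine ⟨?_, hmono (f k) (fun y => |f k y|) (fun y => le_abs_self _) x⟩
        have h2 := hmono (fun y => -|f k y|) (f k) (fun y => neg_abs_le _) x
        have hneg : T (fun y => -|f k y|) x = -(T (fun y => |f k y|) x) := by
          have : (fun y => -|f k y|) = -(fun y => |f k y|) := by ext y; simp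
          rw [this, map_neg]; rfl
        rw [hneg] at h2
        linarith
      calc ∑ k, |t k| ≤ ∑ k, T (fun y => |f k y|) x := Finset.sum_le_sum fun k _ => h1 k
        _ = T g x := by
          rw [hgdef]
          have hfg : (fun y => (∑ k, |f k y| ^ (1:ℝ)) ^ (1/(1:ℝ))) = ∑ k, (fun y => |f k y|) := by
            ext y; simp [Finset.sum_apply]
          rw [hfg, map_sum]
          simp [Finset.sum_apply]
    · have hp1' : 1 < p := lt_of_le_of_ne hp (Ne.symm hp1)
      have hpm1 : (0:ℝ) < p - 1 := by linarith
      set q : ℝ := p / (p - 1) with hqdef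
      have hpq : q.HolderConjugate p := by
        exact ((Real.holderConjugate_iff_eq_conjExponent hp1').2 hqdef).symm
      set a : Fin N → ℝ := fun k => Real.sign (t k) * |t k| ^ (p - 1) / S ^ ((p - 1) / p)
        with hadef
      have hTh : T (fun y => ∑ k, a k * f k y) x = S ^ (1 / p) := by
        have hfun : (fun y => ∑ k, a k * f k y) = ∑ k, a k • f k := by
          ext y; simp [Finset.sum_apply]
        rw [hfun, map_sum]
        have hsum : (∑ k, T (a k • f k)) x = ∑ k, a k * t k := by
          simp [Finset.sum_apply, map_smul, htdef]
        rw [hsum]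
        have hterm : ∀ k, a k * t k = |t k| ^ p / S ^ ((p - 1) / p) := by
          intro k
          rw [hadef]
          have h1 : Real.sign (t k) * |t k| ^ (p - 1) / S ^ ((p - 1) / p) * t k
              = (Real.sign (t k) * t k) * |t k| ^ (p - 1) / S ^ ((p - 1) / p) := by ring
          rw [h1, sign_mul_self_eq_abs]
          congr 1
          rw [← Real.rpow_one_add' (abs_nonneg _)
            (by rw [show (1:ℝ) + (p-1) = p by ring]; exact hppos.ne'),
            show (1:ℝ) + (p-1) = p by ring]
        rw [Finset.sum_congr rfl (fun k _ => hterm k), ← Finset.sum_div, ← hSdef]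
        have h3 : (1:ℝ) - (p-1)/p = 1/p := by field_simp; ring
        rw [← h3, Real.rpow_sub hSpos, Real.rpow_one]
      have hhg : (fun y => ∑ k, a k * f k y) ≤ g := by
        intro y
        have hH := Real.inner_le_Lp_mul_Lq Finset.univ a (fun k => f k y) hpq
        have hone : (∑ k, |a k| ^ q) ^ (1/q) ≤ 1 := by
          apply Real.rpow_le_one (Finset.sum_nonneg fun k _ => Real.rpow_nonneg (abs_nonneg _) _)
            _ (by positivity)
          have hak : ∀ k, |a k| ^ q ≤ |t k| ^ p / S := by
            intro k
            have h2 : |a k| ≤ |t k| ^ (p-1) / S ^ ((p-1)/p) := by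
              rw [hadef]
              simp only [abs_div, abs_mul]
              rw [abs_of_nonneg (Real.rpow_nonneg (abs_nonneg _) _),
                abs_of_nonneg (Real.rpow_nonneg hS0 _)]
              gcongr
              exact mul_le_of_le_one_left (Real.rpow_nonneg (abs_nonneg _) _)
                (abs_sign_le_one _)
            have hq0 : (0:ℝ) ≤ q := (zero_lt_one.trans hpq.lt).le
            calc |a k| ^ q ≤ (|t k| ^ (p-1) / S ^ ((p-1)/p)) ^ q :=
                  Real.rpow_le_rpow (abs_nonneg _) h2 hq0
              _ = |t k| ^ p / S := by
                  rw [Real.div_rpow (Real.rpow_nonneg (abs_nonneg _) _)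
                      (Real.rpow_nonneg hS0 _),
                    ← Real.rpow_mul (abs_nonneg _), ← Real.rpow_mul hS0,
                    show (p-1) * q = p by rw [hqdef]; field_simp,
                    show ((p-1)/p) * q = 1 by rw [hqdef]; field_simp,
                    Real.rpow_one]
          calc ∑ k, |a k| ^ q ≤ ∑ k, |t k| ^ p / S := Finset.sum_le_sum fun k _ => hak k
            _ = S / S := by rw [← Finset.sum_div, ← hSdef]
            _ = 1 := div_self hSpos.ne'
        calc ∑ k, a k * f k y ≤ (∑ k, |a k| ^ q) ^ (1/q) * (∑ k, |f k y| ^ p) ^ (1/p) := hH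
          _ ≤ 1 * (∑ k, |f k y| ^ p) ^ (1/p) := by
              apply mul_le_mul_of_nonneg_right hone
              exact Real.rpow_nonneg (Finset.sum_nonneg fun k _ =>
                Real.rpow_nonneg (abs_nonneg _) _) _
          _ = g y := by rw [one_mul]
      have := hmono _ g hhg x
      rw [hTh] at this
      exact this
  calc S = (S ^ (1/p)) ^ p := by
        rw [← Real.rpow_mul hS0, one_div, inv_mul_cancel₀ hppos.ne', Real.rpow_one]
  _ ≤ (T g x) ^ p := Real.rpow_le_rpow (Real.rpow_nonneg hS0 _) key hppos.le

open MeasureTheory ENNReal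

/-- Scalar-valued to vector-valued upgrade for positive linear operators on
`p_j`-convex normed function lattices. -/
theorem stmt3
    {X : Type*} [MeasurableSpace X] (μ : Measure X)
    {d : ℕ} {α : Fin d → Type*}
    (Nrm : ∀ j, (α j → ℝ) → ℝ) (hNrm : ∀ j f, 0 ≤ Nrm j f)
    (T : ∀ j, (α j → ℝ) →ₗ[ℝ] (X → ℝ))
    (hpos : ∀ j (f : α j → ℝ), 0 ≤ f → 0 ≤ T j f)
    (p : Fin d → ℝ) (hp : ∀ j, 1 ≤ p j)
    (θ : Fin d → ℝ) (hθ : ∀ j, 0 < θ j) (hθsum : ∑ j, θ j = 1)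
    (C : Fin d → ℝ) (hC : ∀ j, 1 ≤ C j)
    (hconv : ∀ j (N : ℕ) (f : Fin N → α j → ℝ),
      Nrm j (fun y => (∑ k, |f k y| ^ (p j)) ^ (1 / p j))
        ≤ C j * (∑ k, Nrm j (f k) ^ (p j)) ^ (1 / p j))
    (B : ℝ≥0∞)
    (hscalar : ∀ f : ∀ j, α j → ℝ,
      ∫⁻ x, ∏ j, (ENNReal.ofReal |T j (f j) x|) ^ (p j * θ j) ∂μ
        ≤ B * ∏ j, ENNReal.ofReal (Nrm j (f j)) ^ (p j * θ j)) :
    ∀ (N : ℕ) (f : ∀ j, Fin N → α j → ℝ),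
      ∫⁻ x, ∏ j, (∑ k, ENNReal.ofReal |T j (f j k) x| ^ (p j)) ^ (θ j) ∂μ
        ≤ B * (∏ j, ENNReal.ofReal (C j) ^ (p j * θ j)) *
          ∏ j, (∑ k, ENNReal.ofReal (Nrm j (f j k)) ^ (p j)) ^ (θ j) := by
  intro N f
  set g : ∀ j, α j → ℝ := fun j => fun y => (∑ k, |f j k y| ^ (p j)) ^ (1 / p j) with hgdef
  have hppos : ∀ j, (0:ℝ) < p j := fun j => lt_of_lt_of_le one_pos (hp j)
  have hgnn : ∀ j, (0 : α j → ℝ) ≤ g j := fun j y =>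
    Real.rpow_nonneg (Finset.sum_nonneg fun k _ => Real.rpow_nonneg (abs_nonneg _) _) _
  have hpt : ∀ x, ∏ j, (∑ k, ENNReal.ofReal |T j (f j k) x| ^ (p j)) ^ (θ j)
      ≤ ∏ j, (ENNReal.ofReal |T j (g j) x|) ^ (p j * θ j) := by
    intro x
    refine Finset.prod_le_prod' fun j _ => ?_
    rw [ENNReal.rpow_mul]
    refine ENNReal.rpow_le_rpow ?_ (hθ j).le
    have hk := key_pointwise (T j) (hpos j) (hp j) (f j) x
    have hTgx : 0 ≤ T j (g j) x := hpos j (g j) (hgnn j) x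
    calc ∑ k, ENNReal.ofReal |T j (f j k) x| ^ (p j)
        = ENNReal.ofReal (∑ k, |T j (f j k) x| ^ (p j)) := by
          rw [ENNReal.ofReal_sum_of_nonneg
            (fun k _ => Real.rpow_nonneg (abs_nonneg _) _)]
          exact Finset.sum_congr rfl fun k _ =>
            ENNReal.ofReal_rpow_of_nonneg (abs_nonneg _) (hppos j).le
      _ ≤ ENNReal.ofReal ((T j (g j) x) ^ (p j)) := ENNReal.ofReal_le_ofReal hk
      _ = ENNReal.ofReal |T j (g j) x| ^ (p j) := by
          rw [abs_of_nonneg hTgx, ENNReal.ofReal_rpow_of_nonneg hTgx (hppos j).le]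
  have h2 : ∀ j, ENNReal.ofReal (Nrm j (g j)) ^ (p j * θ j)
      ≤ ENNReal.ofReal (C j) ^ (p j * θ j)
        * (∑ k, ENNReal.ofReal (Nrm j (f j k)) ^ (p j)) ^ (θ j) := by
    intro j
    have hpθ : (0:ℝ) ≤ p j * θ j := le_of_lt (mul_pos (hppos j) (hθ j))
    have hc := hconv j N (f j)
    calc ENNReal.ofReal (Nrm j (g j)) ^ (p j * θ j)
        ≤ ENNReal.ofReal (C j * (∑ k, Nrm j (f j k) ^ (p j)) ^ (1 / p j)) ^ (p j * θ j) :=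
          ENNReal.rpow_le_rpow (ENNReal.ofReal_le_ofReal hc) hpθ
      _ = (ENNReal.ofReal (C j)
            * ENNReal.ofReal ((∑ k, Nrm j (f j k) ^ (p j)) ^ (1 / p j))) ^ (p j * θ j) := by
          rw [ENNReal.ofReal_mul (by linarith [hC j])]
      _ = ENNReal.ofReal (C j) ^ (p j * θ j)
            * ENNReal.ofReal ((∑ k, Nrm j (f j k) ^ (p j)) ^ (1 / p j)) ^ (p j * θ j) :=
          ENNReal.mul_rpow_of_nonneg _ _ hpθ
      _ = ENNReal.ofReal (C j) ^ (p j * θ j)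
            * (∑ k, ENNReal.ofReal (Nrm j (f j k)) ^ (p j)) ^ (θ j) := by
          congr 1
          rw [← ENNReal.ofReal_rpow_of_nonneg
              (Finset.sum_nonneg fun k _ => Real.rpow_nonneg (hNrm j _) _)
              (by have := hppos j; positivity : (0:ℝ) ≤ 1 / p j),
            ← ENNReal.rpow_mul,
            show (1 / p j) * (p j * θ j) = θ j by field_simp [(hppos j).ne']]
          congr 1
          rw [ENNReal.ofReal_sum_of_nonneg (fun k _ => Real.rpow_nonneg (hNrm j _) _)]
          exact Finset.sum_congr rfl fun k _ =>
            (ENNReal.ofReal_rpow_of_nonneg (hNrm j _) (hppos j).le).symm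
  calc ∫⁻ x, ∏ j, (∑ k, ENNReal.ofReal |T j (f j k) x| ^ (p j)) ^ (θ j) ∂μ
      ≤ ∫⁻ x, ∏ j, (ENNReal.ofReal |T j (g j) x|) ^ (p j * θ j) ∂μ :=
        lintegral_mono hpt
    _ ≤ B * ∏ j, ENNReal.ofReal (Nrm j (g j)) ^ (p j * θ j) := hscalar g
    _ ≤ B * ∏ j, (ENNReal.ofReal (C j) ^ (p j * θ j)
          * (∑ k, ENNReal.ofReal (Nrm j (f j k)) ^ (p j)) ^ (θ j)) :=
        mul_le_mul_right (Finset.prod_le_prod' fun j _ => h2 j) B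
    _ = B * (∏ j, ENNReal.ofReal (C j) ^ (p j * θ j)) *
          ∏ j, (∑ k, ENNReal.ofReal (Nrm j (f j k)) ^ (p j)) ^ (θ j) := by
        rw [Finset.prod_mul_distrib, ← mul_assoc]
end

section
/- Suppose, for positive linear operators $T_j:L^{r_j}(\mathbb{R})\to\mathcal{M}(\mathbb{R}^d)$ satisfying $\int\prod_j|T_jf_j|^{\gamma_j}\lesssim\prod_j\|f_j\|_{r_j}^{\gamma_j}$, the exponents $(p_j)$ with $0<p_j<\infty$ always admit weights $(\phi_j)$ with $\prod_j\phi_j^{\gamma_j/p_j}\geq1$ a.e. and $(\int|T_jf_j|^{p_j}\phi_j)^{1/p_j}\lesssim\|f_j\|_{r_j}$. Then necessarily $\sum_{j=1}^d\gamma_j/p_j=1$. -/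
open MeasureTheory ENNReal

theorem lintegral_pi_prod {n : ℕ} (g : Fin n → ℝ → ℝ≥0∞) (hg : ∀ i, Measurable (g i)) :
    ∫⁻ x : Fin n → ℝ, ∏ i, g i (x i) = ∏ i, ∫⁻ t, g i t := by
  induction n with
  | zero => simp [volume_pi]
  | succ n ih =>
    have h := (measurePreserving_piFinSuccAbove (fun _ : Fin (n+1) => (volume : Measure ℝ)) 0).symm
    have hmeas : Measurable fun x : Fin (n+1) → ℝ => ∏ i, g i (x i) :=
      Finset.measurable_prod _ fun i _ => (hg i).comp (measurable_pi_apply i)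
    have := h.lintegral_comp hmeas
    rw [volume_pi, ← this]
    simp_rw [MeasurableEquiv.piFinSuccAbove_symm_apply, Fin.insertNthEquiv,
      Fin.prod_univ_succ, Fin.insertNth_zero, Equiv.coe_fn_mk, Fin.cons_zero, Fin.cons_succ,
      cast_eq]
    rw [lintegral_prod_mul (f := g 0) (g := fun y : Fin n → ℝ => ∏ i, g i.succ (y i))
      (hg 0).aemeasurable
      (Finset.measurable_prod _ fun i _ => (hg i.succ).comp (measurable_pi_apply i)).aemeasurable]
    rw [show (∫⁻ x : Fin n → ℝ, ∏ i, g i.succ (x i) ∂(Measure.pi fun _ => volume))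
        = ∏ i : Fin n, ∫⁻ t, g i.succ t from ih (fun i => g i.succ) (fun i => hg i.succ)]

theorem stmt14_holder_aux {q : ℝ} (hq : 1 ≤ q) {f : ℝ → ℝ}
    (hf : MemLp f (ENNReal.ofReal q) volume) :
    ENNReal.ofReal |∫ t in Set.Ioo (0:ℝ) 1, f t| ≤ eLpNorm f (ENNReal.ofReal q) volume := by
  haveI : IsFiniteMeasure (volume.restrict (Set.Ioo (0:ℝ) 1)) :=
    ⟨by simp [Real.volume_Ioo]⟩
  have h1 : (1:ℝ≥0∞) ≤ ENNReal.ofReal q := by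
    rw [← ENNReal.ofReal_one]; exact ENNReal.ofReal_le_ofReal hq
  have hint : Integrable f (volume.restrict (Set.Ioo (0:ℝ) 1)) := (hf.restrict _).integrable h1
  calc ENNReal.ofReal |∫ t in Set.Ioo (0:ℝ) 1, f t|
      ≤ ENNReal.ofReal (∫ t in Set.Ioo (0:ℝ) 1, |f t|) := by
        apply ENNReal.ofReal_le_ofReal
        simpa [Real.norm_eq_abs] using
          norm_integral_le_integral_norm (μ := volume.restrict (Set.Ioo (0:ℝ) 1)) f
    _ = ∫⁻ t in Set.Ioo (0:ℝ) 1, ENNReal.ofReal |f t| :=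
        ofReal_integral_eq_lintegral_ofReal hint.abs (ae_of_all _ fun t => abs_nonneg _)
    _ = eLpNorm f 1 (volume.restrict (Set.Ioo (0:ℝ) 1)) := by
        rw [eLpNorm_one_eq_lintegral_enorm]
        simp_rw [← ofReal_norm, Real.norm_eq_abs]
    _ ≤ eLpNorm f (ENNReal.ofReal q) (volume.restrict (Set.Ioo (0:ℝ) 1)) *
        (volume.restrict (Set.Ioo (0:ℝ) 1)) Set.univ ^
          (1/(1:ℝ≥0∞).toReal - 1/(ENNReal.ofReal q).toReal) :=
        eLpNorm_le_eLpNorm_mul_rpow_measure_univ h1 hint.1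
    _ ≤ eLpNorm f (ENNReal.ofReal q) volume * 1 := by
        refine mul_le_mul (eLpNorm_mono_measure f Measure.restrict_le_self) ?_ (zero_le ..)
          (zero_le ..)
        have h2 : (volume.restrict (Set.Ioo (0:ℝ) 1)) Set.univ = 1 := by simp [Real.volume_Ioo]
        rw [h2, ENNReal.one_rpow]
    _ = _ := mul_one _

/-- Necessity of the homogeneity condition `∑ γ_j / p_j = 1` in the Basic Question. -/
theorem stmt14 {d : ℕ} (hd : 0 < d) (r γ p : Fin d → ℝ)
    (hr : ∀ j, 1 ≤ r j) (hγ : ∀ j, 0 < γ j) (hp : ∀ j, 0 < p j)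
    (H : ∀ T : ∀ _ : Fin d, (ℝ → ℝ) → (Fin d → ℝ) → ℝ,
      -- `T j` is linear (on `L^{r_j}`) and positive, mapping measurable functions
      -- to measurable functions
      (∀ j (f f' : ℝ → ℝ), MemLp f (ENNReal.ofReal (r j)) volume →
        MemLp f' (ENNReal.ofReal (r j)) volume → T j (f + f') = T j f + T j f') →
      (∀ j (c : ℝ) (f : ℝ → ℝ), T j (c • f) = c • T j f) →
      (∀ j (f : ℝ → ℝ), 0 ≤ f → 0 ≤ T j f) →
      (∀ j (f : ℝ → ℝ), Measurable f → Measurable (T j f)) →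
      -- the product bound `∫ ∏ |T_j f_j|^{γ_j} ≲ ∏ ‖f_j‖_{r_j}^{γ_j}`
      (∃ C : ℝ≥0∞, C ≠ ⊤ ∧ ∀ f : Fin d → ℝ → ℝ,
        (∀ j, Measurable (f j)) →
        (∀ j, MemLp (f j) (ENNReal.ofReal (r j)) volume) →
        ∫⁻ x : Fin d → ℝ, ∏ j, ENNReal.ofReal |T j (f j) x| ^ (γ j)
          ≤ C * ∏ j, eLpNorm (f j) (ENNReal.ofReal (r j)) volume ^ (γ j)) →
      -- then there are disentangling weights
      ∃ φ : Fin d → (Fin d → ℝ) → ℝ≥0∞, (∀ j, Measurable (φ j)) ∧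
        (∀ᵐ x : Fin d → ℝ, 1 ≤ ∏ j, φ j x ^ (γ j / p j)) ∧
        ∃ C' : ℝ≥0∞, C' ≠ ⊤ ∧ ∀ j (f : ℝ → ℝ), Measurable f →
          MemLp f (ENNReal.ofReal (r j)) volume →
          (∫⁻ x : Fin d → ℝ, ENNReal.ofReal |T j f x| ^ (p j) * φ j x) ^ (1 / p j)
            ≤ C' * eLpNorm f (ENNReal.ofReal (r j)) volume) :
    ∑ j, γ j / p j = 1 := by
  classical
  by_contra hne
  set lam := ∑ j, γ j / p j with hlam
  have hlam0 : 0 < lam :=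
    Finset.sum_pos (fun j _ => div_pos (hγ j) (hp j)) ⟨⟨0, hd⟩, Finset.mem_univ _⟩
  have hlamne : lam ≠ 1 := hne
  -- the set and the power functions
  set S : Set ℝ := if 1 < lam then Set.Ioi 1 else Set.Ioo 0 1 with hSdef
  have hSm : MeasurableSet S := by
    rw [hSdef]; split
    · exact measurableSet_Ioi
    · exact measurableSet_Ioo
  have hSsub : S ⊆ Set.Ioi (0:ℝ) := by
    rw [hSdef]; split
    · exact fun x hx => Set.mem_Ioi.mpr (lt_trans zero_lt_one (Set.mem_Ioi.mp hx))
    · exact Set.Ioo_subset_Ioi_self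
  set s : Fin d → ℝ := fun j => (1 + lam) / (2 * γ j) with hsdef
  set Φ : Fin d → ℝ → ℝ := fun j => S.indicator (fun t => t ^ (-(s j))) with hΦdef
  have hΦm : ∀ j, Measurable (Φ j) :=
    fun j => (measurable_id.pow measurable_const).indicator hSm
  have hΦnn : ∀ j t, 0 ≤ Φ j t := fun j t =>
    Set.indicator_nonneg (fun x hx => Real.rpow_nonneg (le_of_lt (hSsub hx)) _) t
  -- representation of the lintegrals
  have hrep : ∀ (j : Fin d) (c : ℝ), 0 < c →
      (∫⁻ t, ENNReal.ofReal (Φ j t) ^ c) = ∫⁻ t in S, ENNReal.ofReal (t ^ (-(s j) * c)) := by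
    intro j c hc
    rw [← lintegral_indicator hSm]
    congr 1; funext t
    by_cases ht : t ∈ S
    · have h0 : (0:ℝ) < t := hSsub ht
      rw [hΦdef]
      simp only [Set.indicator_of_mem ht]
      rw [ENNReal.ofReal_rpow_of_pos (Real.rpow_pos_of_pos h0 _), ← Real.rpow_mul h0.le]
    · rw [hΦdef]
      simp only [Set.indicator_of_notMem ht]
      rw [ENNReal.ofReal_zero, ENNReal.zero_rpow_of_pos hc]
  have hiff : ∀ e : ℝ, (∫⁻ t in S, ENNReal.ofReal (t ^ e)) < ⊤ ↔
      IntegrableOn (fun t : ℝ => t ^ e) S := by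
    intro e
    have hnn : 0 ≤ᵐ[volume.restrict S] fun t : ℝ => t ^ e := by
      filter_upwards [self_mem_ae_restrict hSm] with t ht
      exact Real.rpow_nonneg (hSsub ht).le e
    constructor
    · intro h
      exact ⟨(measurable_id.pow measurable_const).aestronglyMeasurable,
        (hasFiniteIntegral_iff_ofReal hnn).mpr h⟩
    · intro h
      exact (hasFiniteIntegral_iff_ofReal hnn).mp h.2
  have hexp1 : ∀ j, -(s j) * γ j = -((1 + lam) / 2) := by
    intro j
    rw [hsdef]
    have h1 := (hγ j).ne'
    field_simp
  have hexp2 : ∀ j, -(s j) * (γ j / lam) = -((1 + lam) / (2 * lam)) := by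
    intro j
    rw [hsdef]
    have h1 := (hγ j).ne'
    have h2 := hlam0.ne'
    field_simp
  have hfin : ∀ j, (∫⁻ t, ENNReal.ofReal (Φ j t) ^ (γ j)) < ⊤ := by
    intro j
    rw [hrep j _ (hγ j), hexp1, hiff]
    by_cases hl : 1 < lam
    · rw [hSdef, if_pos hl]
      exact (integrableOn_Ioi_rpow_iff zero_lt_one).mpr (by linarith)
    · have hl' : lam < 1 := lt_of_le_of_ne (not_lt.mp hl) hlamne
      rw [hSdef, if_neg hl]
      exact (intervalIntegral.integrableOn_Ioo_rpow_iff zero_lt_one).mpr (by linarith)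
  have hinf : ∀ j, (∫⁻ t, ENNReal.ofReal (Φ j t) ^ (γ j / lam)) = ⊤ := by
    intro j
    by_contra h'
    have h'' : (∫⁻ t, ENNReal.ofReal (Φ j t) ^ (γ j / lam)) < ⊤ := lt_top_iff_ne_top.mpr h'
    rw [hrep j _ (div_pos (hγ j) hlam0), hexp2, hiff] at h''
    by_cases hl : 1 < lam
    · rw [hSdef, if_pos hl] at h''
      have := (integrableOn_Ioi_rpow_iff zero_lt_one).mp h''
      have h2 : (1:ℝ) < (1 + lam) / (2 * lam) := by linarith
      rw [lt_div_iff₀ (by positivity)] at h2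
      linarith
    · have hl' : lam < 1 := lt_of_le_of_ne (not_lt.mp hl) hlamne
      rw [hSdef, if_neg hl] at h''
      have := (intervalIntegral.integrableOn_Ioo_rpow_iff zero_lt_one).mp h''
      have h2 : (1 + lam) / (2 * lam) < 1 := by linarith
      rw [div_lt_iff₀ (by positivity)] at h2
      linarith
  -- the operator
  set T : ∀ _ : Fin d, (ℝ → ℝ) → (Fin d → ℝ) → ℝ :=
    fun j f x => (∫ t in Set.Ioo (0:ℝ) 1, f t) * Φ j (x j) with hT
  haveI : IsFiniteMeasure (volume.restrict (Set.Ioo (0:ℝ) 1)) :=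
    ⟨by simp [Real.volume_Ioo]⟩
  have hInt : ∀ (j : Fin d) (f : ℝ → ℝ), MemLp f (ENNReal.ofReal (r j)) volume →
      Integrable f (volume.restrict (Set.Ioo (0:ℝ) 1)) := by
    intro j f hf
    refine (hf.restrict _).integrable ?_
    rw [← ENNReal.ofReal_one]
    exact ENNReal.ofReal_le_ofReal (hr j)
  -- measurability of the factors
  have hgm : ∀ (j : Fin d) (c : ℝ), Measurable (fun t : ℝ => ENNReal.ofReal (Φ j t) ^ c) :=
    fun j c => ((hΦm j).ennreal_ofReal).pow measurable_const
  obtain ⟨φ, hφm, hφ1, C', hC't, hw⟩ := H T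
    (by
      intro j f f' hf hf'
      funext x
      simp only [hT, Pi.add_apply]
      rw [integral_add (hInt j f hf) (hInt j f' hf')]
      ring)
    (by
      intro j c f
      funext x
      simp only [hT, Pi.smul_apply, smul_eq_mul]
      rw [integral_const_mul]
      ring)
    (fun j f hf x => mul_nonneg (integral_nonneg fun t => hf t) (hΦnn j (x j)))
    (fun j f _ => measurable_const.mul ((hΦm j).comp (measurable_pi_apply j)))
    (by
      refine ⟨∏ j, ∫⁻ t, ENNReal.ofReal (Φ j t) ^ (γ j),
        (ENNReal.prod_lt_top fun j _ => hfin j).ne, ?_⟩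
      intro f hfm hfℒ
      have hmeasprod : Measurable fun x : Fin d → ℝ =>
          ∏ j, ENNReal.ofReal (Φ j (x j)) ^ (γ j) :=
        Finset.measurable_prod _ fun j _ => (hgm j (γ j)).comp (measurable_pi_apply j)
      calc ∫⁻ x : Fin d → ℝ, ∏ j, ENNReal.ofReal |T j (f j) x| ^ (γ j)
          = ∫⁻ x : Fin d → ℝ, (∏ j, ENNReal.ofReal |∫ t in Set.Ioo (0:ℝ) 1, f j t| ^ (γ j)) *
              ∏ j, ENNReal.ofReal (Φ j (x j)) ^ (γ j) := by
            congr 1; funext x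
            rw [← Finset.prod_mul_distrib]
            refine Finset.prod_congr rfl fun j _ => ?_
            rw [hT]
            simp only
            rw [abs_mul, abs_of_nonneg (hΦnn j (x j)),
              ENNReal.ofReal_mul (abs_nonneg _),
              ENNReal.mul_rpow_of_nonneg _ _ (hγ j).le]
        _ = (∏ j, ENNReal.ofReal |∫ t in Set.Ioo (0:ℝ) 1, f j t| ^ (γ j)) *
              ∏ j, ∫⁻ t, ENNReal.ofReal (Φ j t) ^ (γ j) := by
            rw [lintegral_const_mul _ hmeasprod,
              lintegral_pi_prod _ (fun j => hgm j (γ j))]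
        _ ≤ (∏ j, eLpNorm (f j) (ENNReal.ofReal (r j)) volume ^ (γ j)) *
              ∏ j, ∫⁻ t, ENNReal.ofReal (Φ j t) ^ (γ j) := by
            refine mul_le_mul ?_ le_rfl (zero_le ..) (zero_le ..)
            refine Finset.prod_le_prod' fun j _ => ?_
            exact ENNReal.rpow_le_rpow (stmt14_holder_aux (hr j) (hfℒ j)) (hγ j).le
        _ = (∏ j, ∫⁻ t, ENNReal.ofReal (Φ j t) ^ (γ j)) *
              ∏ j, eLpNorm (f j) (ENNReal.ofReal (r j)) volume ^ (γ j) := mul_comm _ _)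
  -- test with the indicator function
  set F : ℝ → ℝ := (Set.Ioo (0:ℝ) 1).indicator (fun _ => (1:ℝ)) with hF
  have hFm : Measurable F := measurable_const.indicator measurableSet_Ioo
  have hFℒ : ∀ j, MemLp F (ENNReal.ofReal (r j)) volume := fun j =>
    memLp_indicator_const _ measurableSet_Ioo 1 (Or.inr (by simp [Real.volume_Ioo]))
  have hFint : (∫ t in Set.Ioo (0:ℝ) 1, F t) = 1 := by
    rw [hF, setIntegral_indicator measurableSet_Ioo, Set.inter_self]
    simp [Real.volume_Ioo]
  have hTF : ∀ (j : Fin d) (x : Fin d → ℝ), T j F x = Φ j (x j) := by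
    intro j x
    rw [hT]
    simp only
    rw [hFint, one_mul]
  have hA : ∀ j, (∫⁻ x : Fin d → ℝ, ENNReal.ofReal (Φ j (x j)) ^ (p j) * φ j x) < ⊤ := by
    intro j
    have hwj := hw j F hFm (hFℒ j)
    have heq : (∫⁻ x : Fin d → ℝ, ENNReal.ofReal |T j F x| ^ (p j) * φ j x)
        = ∫⁻ x : Fin d → ℝ, ENNReal.ofReal (Φ j (x j)) ^ (p j) * φ j x := by
      refine lintegral_congr fun x => ?_
      rw [hTF j x, abs_of_nonneg (hΦnn j (x j))]
    rw [heq] at hwj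
    by_contra htop
    rw [not_lt, top_le_iff] at htop
    rw [htop, ENNReal.top_rpow_of_pos (one_div_pos.mpr (hp j))] at hwj
    have hlt : C' * eLpNorm F (ENNReal.ofReal (r j)) volume < ⊤ :=
      ENNReal.mul_lt_top hC't.lt_top (hFℒ j).2
    exact absurd (lt_of_le_of_lt hwj hlt) (lt_irrefl ⊤)
  -- Hölder
  set q : Fin d → ℝ := fun j => γ j / (lam * p j) with hq
  have hqpos : ∀ j, 0 < q j := fun j => div_pos (hγ j) (mul_pos hlam0 (hp j))
  have hqsum : ∑ j, q j = 1 := by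
    rw [hq]
    have h1 : ∀ j : Fin d, γ j / (lam * p j) = (γ j / p j) / lam := by
      intro j; rw [div_div, mul_comm]
    simp_rw [h1]
    rw [← Finset.sum_div, ← hlam, div_self hlam0.ne']
  have hpq : ∀ j, p j * q j = γ j / lam := by
    intro j
    rw [hq]
    have h1 := (hp j).ne'
    have h2 := hlam0.ne'
    field_simp
  have hgpmeas : ∀ j : Fin d, Measurable fun x : Fin d → ℝ =>
      ENNReal.ofReal (Φ j (x j)) ^ (p j) * φ j x :=
    fun j => ((hgm j (p j)).comp (measurable_pi_apply j)).mul (hφm j)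
  have hmain : (∫⁻ x : Fin d → ℝ, ∏ j, ENNReal.ofReal (Φ j (x j)) ^ (γ j / lam)) < ⊤ := by
    have hstep1 : (∫⁻ x : Fin d → ℝ, ∏ j, ENNReal.ofReal (Φ j (x j)) ^ (γ j / lam))
        ≤ ∫⁻ x : Fin d → ℝ, ∏ j, (ENNReal.ofReal (Φ j (x j)) ^ (p j) * φ j x) ^ (q j) := by
      refine lintegral_mono_ae ?_
      filter_upwards [hφ1] with x hx
      have h2 : (1:ℝ≥0∞) ≤ ∏ j, (φ j x) ^ (q j) := by
        have h3 : ∀ j : Fin d, (φ j x) ^ (q j) = ((φ j x) ^ (γ j / p j)) ^ (1/lam) := by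
          intro j
          rw [← ENNReal.rpow_mul]
          congr 1
          simp only [hq]
          rw [div_mul_div_comm, mul_one, mul_comm (p j) lam]
        simp_rw [h3]
        rw [ENNReal.prod_rpow_of_nonneg (one_div_pos.mpr hlam0).le]
        calc (1:ℝ≥0∞) = 1 ^ (1/lam : ℝ) := (ENNReal.one_rpow _).symm
          _ ≤ (∏ j, (φ j x) ^ (γ j / p j)) ^ (1/lam : ℝ) :=
            ENNReal.rpow_le_rpow hx (one_div_pos.mpr hlam0).le
      calc ∏ j, ENNReal.ofReal (Φ j (x j)) ^ (γ j / lam)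
          = ∏ j, (ENNReal.ofReal (Φ j (x j)) ^ (p j)) ^ (q j) := by
            refine Finset.prod_congr rfl fun j _ => ?_
            rw [← ENNReal.rpow_mul, hpq]
        _ = (∏ j, (ENNReal.ofReal (Φ j (x j)) ^ (p j)) ^ (q j)) * 1 := (mul_one _).symm
        _ ≤ (∏ j, (ENNReal.ofReal (Φ j (x j)) ^ (p j)) ^ (q j)) * ∏ j, (φ j x) ^ (q j) :=
            mul_le_mul le_rfl h2 zero_le_one (zero_le ..)
        _ = ∏ j, (ENNReal.ofReal (Φ j (x j)) ^ (p j) * φ j x) ^ (q j) := by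
            rw [← Finset.prod_mul_distrib]
            exact Finset.prod_congr rfl fun j _ =>
              (ENNReal.mul_rpow_of_nonneg _ _ (hqpos j).le).symm
    have hstep2 := ENNReal.lintegral_prod_norm_pow_le (μ := (volume : Measure (Fin d → ℝ)))
      Finset.univ (f := fun j (x : Fin d → ℝ) => ENNReal.ofReal (Φ j (x j)) ^ (p j) * φ j x)
      (fun j _ => (hgpmeas j).aemeasurable) hqsum (fun j _ => (hqpos j).le)
    refine lt_of_le_of_lt (hstep1.trans hstep2) ?_
    exact ENNReal.prod_lt_top fun j _ =>
      ENNReal.rpow_lt_top_of_nonneg (hqpos j).le (hA j).ne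
  rw [lintegral_pi_prod _ (fun j => hgm j (γ j / lam))] at hmain
  have hprodtop : (∏ j, ∫⁻ t, ENNReal.ofReal (Φ j t) ^ (γ j / lam)) = ⊤ := by
    rw [Finset.prod_congr rfl (fun j _ => hinf j), Finset.prod_const]
    simp only [Finset.card_univ, Fintype.card_fin]
    exact ENNReal.top_pow hd.ne'
  rw [hprodtop] at hmain
  exact absurd hmain (lt_irrefl ⊤)
end
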